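/- For a bounded k-form ω on ℝⁿ and r ≥ 1, the norm ‖ω‖_{B^r} = max{|ω|_{B⁰},...,|ω|_{B^r}} (defined via finite differences) equals the norm ‖ω‖_{C^{r−1+Lip}} = max{|ω|_{C⁰},...,|ω|_{C^{r−1}}, |ω|_{L^r}} (defined via suprema of directional derivatives of orders up to r−1 and the Lipschitz constant of the (r−1)-th derivatives); in particular one is finite iff the other is. -/

import Mathlib

/-! Pointed chains: finitely supported functions from points of `E` to "k-vectors" in `V`,
difference chains, and the `B^r` norms of J. Harrison's theory of differential chains. -/

open Finsupp

variable {E V : Type*} [NormedAddCommGroup E] [NormedSpace ℝ E]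
  [NormedAddCommGroup V] [NormedSpace ℝ V]

/-- The difference chain `Δ^j_U (p; α)`, for a list `U = [u₁,…,u_j]` of vectors. -/
noncomputable def diffChain : List E → E → V → (E →₀ V)
  | [], p, α => Finsupp.single p α
  | u :: U, p, α => Finsupp.mapDomain (· + u) (diffChain U p α) - diffChain U p α

/-- The weight `|Δ^j_U(p;α)|_j := ‖u₁‖⋯‖u_j‖‖α‖` of a difference chain. -/
noncomputable def dweight (U : List E) (α : V) : ℝ := (U.map fun u => ‖u‖).prod * ‖α‖

/-- The `r`-norm `‖A‖_{B^r}` on pointed chains: the infimum of `Σᵢ |Δ^{jᵢ}_{Uᵢ}(pᵢ;αᵢ)|_{jᵢ}`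
over all decompositions `A = Σᵢ Δ^{jᵢ}_{Uᵢ}(pᵢ;αᵢ)` with all `jᵢ ≤ r`. -/
noncomputable def Bnorm (r : ℕ) (A : E →₀ V) : ℝ :=
  sInf {s : ℝ | ∃ L : List (List E × E × V),
    (∀ t ∈ L, t.1.length ≤ r) ∧
    A = (L.map fun t => diffChain t.1 t.2.1 t.2.2).sum ∧
    s = (L.map fun t => dweight t.1 t.2.2).sum}

/-- Evaluation (integration) of a `k`-form `ω` (as a function of a point and a `k`-vector)
on a pointed chain `A`: `ω(Σ(pᵢ;αᵢ)) = Σ ω(pᵢ;αᵢ)`. -/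
noncomputable def pairF (ω : E → V → ℝ) (A : E →₀ V) : ℝ := A.sum fun p α => ω p α

/-- `C` is a `B^r`-bound for the form `ω`: `|ω(Δ^j_U(p;α))| ≤ C·‖u₁‖⋯‖u_j‖‖α‖` for all
difference chains of order `j ≤ r`.  Thus `‖ω‖_{B^r} = max{|ω|_{B⁰},…,|ω|_{B^r}}` is the
least such `C ≥ 0`. -/
def IsBBound (r : ℕ) (ω : E → V → ℝ) (C : ℝ) : Prop :=
  ∀ (U : List E) (p : E) (α : V), U.length ≤ r →
    |pairF ω (diffChain U p α)| ≤ C * dweight U α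

/-- `C` is a `C^{r−1+Lip}`-bound for the (continuous-linear-functional valued) form `ω`:
`ω` is `C^{r−1}`, all its directional derivatives of order `j ≤ r−1` are bounded by `C`
(on unit directions and unit `k`-vectors), and its `(r−1)`-th directional derivatives are
Lipschitz with constant `C`.  Thus `‖ω‖_{C^{r−1+Lip}}` is the least such `C ≥ 0`. -/
def IsCBound (r : ℕ) (ω : E → V →L[ℝ] ℝ) (C : ℝ) : Prop :=
  ContDiff ℝ (r - 1 : ℕ) ω ∧
  (∀ j : ℕ, j ≤ r - 1 → ∀ p : E, ‖iteratedFDeriv ℝ j ω p‖ ≤ C) ∧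
  (∀ p q : E,
    ‖iteratedFDeriv ℝ (r - 1) ω p - iteratedFDeriv ℝ (r - 1) ω q‖ ≤ C * ‖p - q‖)

/-! ### Auxiliary development: iterated finite differences -/

set_option linter.unusedSectionVars false
set_option maxHeartbeats 1000000

open Filter Topology Asymptotics

section FDdef

variable {E' : Type*} [NormedAddCommGroup E'] [NormedSpace ℝ E']

/-- Iterated finite difference of a function along a list of vectors. -/
noncomputable def fd {F : Type*} [NormedAddCommGroup F] [NormedSpace ℝ F] :
    List E' → (E' → F) → E' → F
  | [], f, p => f p
  | u :: U, f, p => fd U (fun x => f (x + u)) p - fd U f p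

variable {F G : Type*} [NormedAddCommGroup F] [NormedSpace ℝ F]
  [NormedAddCommGroup G] [NormedSpace ℝ G]

@[simp] lemma fd_nil (f : E' → F) (p : E') : fd [] f p = f p := rfl

lemma fd_cons (u : E') (U : List E') (f : E' → F) (p : E') :
    fd (u :: U) f p = fd U (fun x => f (x + u)) p - fd U f p := rfl

lemma fd_congr {U : List E'} {f g : E' → F} (h : ∀ x, f x = g x) (p : E') :
    fd U f p = fd U g p := by rw [funext h]

lemma fd_sub (U : List E') (f g : E' → F) (p : E') :
    fd U (fun x => f x - g x) p = fd U f p - fd U g p := by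
  induction U generalizing f g with
  | nil => rfl
  | cons u U ih =>
      simp only [fd_cons, ih]
      abel

lemma fd_smul (U : List E') (c : ℝ) (f : E' → F) (p : E') :
    fd U (fun x => c • f x) p = c • fd U f p := by
  induction U generalizing f with
  | nil => rfl
  | cons u U ih => simp only [fd_cons, ih, smul_sub]

lemma fd_translate (U : List E') (f : E' → F) (u p : E') :
    fd U (fun x => f (x + u)) p = fd U f (p + u) := by
  induction U generalizing f u p with
  | nil => rfl
  | cons w U ih =>
      simp only [fd_cons]
      rw [show (fun x => (fun y => f (y + u)) (x + w)) = fun x => (fun y => f (y + w)) (x + u) by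
        funext x; simp [add_right_comm], ih (fun y => f (y + w)) u p, ih f w (p + u),
        ih f u p]

lemma fd_cons' (u : E') (U : List E') (f : E' → F) (p : E') :
    fd (u :: U) f p = fd U f (p + u) - fd U f p := by
  rw [fd_cons, fd_translate]

lemma fd_append_single (U : List E') (w : E') (f : E' → F) (p : E') :
    fd (U ++ [w]) f p = fd U (fun x => f (x + w) - f x) p := by
  induction U generalizing f with
  | nil => rfl
  | cons u U ih =>
      rw [List.cons_append, fd_cons, ih, ih, fd_cons]
      congr 1
      apply fd_congr (fun x => ?_)
      rw [add_right_comm]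

lemma fd_tendsto {U : List E'} {g : ℕ → E' → F} {h : E' → F}
    (hg : ∀ x, Tendsto (fun n => g n x) atTop (𝓝 (h x))) (p : E') :
    Tendsto (fun n => fd U (g n) p) atTop (𝓝 (fd U h p)) := by
  induction U generalizing g h p with
  | nil => exact hg p
  | cons u U ih =>
      simp only [fd_cons]
      exact ((ih (g := fun n x => g n (x + u)) (fun x => hg (x + u)) p)).sub (ih hg p)

lemma fd_clm_apply (U : List E') (f : E' → F →L[ℝ] G) (p : E') (α : F) :
    fd U f p α = fd U (fun x => f x α) p := by
  induction U generalizing f with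
  | nil => rfl
  | cons u U ih => simp only [fd_cons, ContinuousLinearMap.sub_apply, ih]

lemma fd_hasFDerivAt {U : List E'} {f : E' → F} {f' : E' → E' →L[ℝ] F}
    (hf : ∀ y, HasFDerivAt f (f' y) y) (x : E') :
    HasFDerivAt (fun y => fd U f y) (fd U f' x) x := by
  induction U generalizing x with
  | nil => exact hf x
  | cons u U ih =>
      have h1 : HasFDerivAt (fun y => fd U f (y + u)) (fd U f' (x + u)) x := by
        have := (ih (x + u)).comp x ((hasFDerivAt_id x).add_const u)
        simpa [Function.comp_def] using this
      have h2 := (h1.sub (ih x))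
      have : (fun y => fd U f (y + u) - fd U f y) = fun y => fd (u :: U) f y := by
        funext y; rw [fd_cons']
      rw [show ((fun y => fd U f (y + u)) - fun y => fd U f y) = fun y => fd (u :: U) f y from this] at h2
      rw [fd_cons']
      exact h2

lemma fd_comp_lie (e : F ≃ₗᵢ[ℝ] G) (U : List E') (f : E' → F) (p : E') :
    fd U (fun x => e (f x)) p = e (fd U f p) := by
  induction U generalizing f with
  | nil => rfl
  | cons u U ih => simp only [fd_cons, ih, map_sub]

lemma prod_norm_nonneg (U : List E') : (0:ℝ) ≤ (U.map fun v => ‖v‖).prod :=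
  List.prod_nonneg (by intro a ha; simp at ha; obtain ⟨b, _, rfl⟩ := ha; positivity)

end FDdef

/-! ### Forward direction: smoothness bounds imply finite-difference bounds -/

universe uE uF uV

section Forward
variable {E' : Type uE} [NormedAddCommGroup E'] [NormedSpace ℝ E']

lemma fd_mvt {F : Type*} [NormedAddCommGroup F] [NormedSpace ℝ F]
    {f : E' → F} (hdiff : Differentiable ℝ f) {U : List E'} {B : ℝ}
    (hB : ∀ x, ‖fd U (fderiv ℝ f) x‖ ≤ B) (u : E') (p : E') :
    ‖fd (u :: U) f p‖ ≤ B * ‖u‖ := by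
  have hder : ∀ y, HasFDerivAt f (fderiv ℝ f y) y := fun y => (hdiff y).hasFDerivAt
  rw [fd_cons']
  have := Convex.norm_image_sub_le_of_norm_fderiv_le
    (f := fun y => fd U f y) (s := (Set.univ : Set E')) (C := B)
    (fun x _ => (fd_hasFDerivAt hder x).differentiableAt)
    (fun x _ => by rw [(fd_hasFDerivAt hder x).fderiv]; exact hB x)
    convex_univ (Set.mem_univ (p + u)) (Set.mem_univ p)
  rw [norm_sub_rev, show p - (p + u) = -u by abel, norm_neg] at this
  exact this

theorem norm_fd_le : ∀ (n : ℕ) {F : Type (max uE uF)} [NormedAddCommGroup F] [NormedSpace ℝ F]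
    (f : E' → F) (K : ℝ) (U : List E'), U.length = n → ContDiff ℝ (n : ℕ) f →
    (∀ x, ‖iteratedFDeriv ℝ n f x‖ ≤ K) →
    ∀ p, ‖fd U f p‖ ≤ K * (U.map fun v => ‖v‖).prod := by
  intro n
  induction n with
  | zero =>
    intro F _ _ f K U hU hf hK p
    rw [List.length_eq_zero_iff] at hU
    subst hU
    simpa using (norm_iteratedFDeriv_zero (f := f) (x := p)).symm.trans_le (hK p)
  | succ n ih =>
    intro F _ _ f K U hU hf hK p
    obtain ⟨v, U', rfl⟩ : ∃ v U', U = v :: U' := by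
      cases U with
      | nil => simp at hU
      | cons a b => exact ⟨a, b, rfl⟩
    have hU' : U'.length = n := by simpa using hU
    have hf1 : ContDiff ℝ ((n : WithTop ℕ∞) + 1) f := by exact_mod_cast hf
    have hdiff : Differentiable ℝ f := (contDiff_succ_iff_fderiv.1 hf1).1
    have hf' : ContDiff ℝ (n : ℕ) (fderiv ℝ f) := (contDiff_succ_iff_fderiv.1 hf1).2.2
    have hK' : ∀ x, ‖iteratedFDeriv ℝ n (fderiv ℝ f) x‖ ≤ K := by
      intro x; rw [norm_iteratedFDeriv_fderiv]; exact hK x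
    have hb := ih (fderiv ℝ f) K U' hU' hf' hK'
    have := fd_mvt hdiff (fun x => hb x) v p
    calc ‖fd (v :: U') f p‖ ≤ K * (U'.map fun v => ‖v‖).prod * ‖v‖ := this
    _ = K * ((v :: U').map fun v => ‖v‖).prod := by simp; ring

theorem norm_fd_le_lip : ∀ (n : ℕ) {F : Type (max uE uF)} [NormedAddCommGroup F]
    [NormedSpace ℝ F] (f : E' → F) (K : ℝ) (U : List E'), U.length = n + 1 →
    ContDiff ℝ (n : ℕ) f →
    (∀ x y, ‖iteratedFDeriv ℝ n f x - iteratedFDeriv ℝ n f y‖ ≤ K * ‖x - y‖) →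
    ∀ p, ‖fd U f p‖ ≤ K * (U.map fun v => ‖v‖).prod := by
  intro n
  induction n with
  | zero =>
    intro F _ _ f K U hU hf hK p
    obtain ⟨v, U', rfl⟩ : ∃ v U', U = v :: U' := by
      cases U with
      | nil => simp at hU
      | cons a b => exact ⟨a, b, rfl⟩
    have hU' : U' = [] := by simpa [List.length_eq_zero_iff] using hU
    subst hU'
    have key : ∀ x y : E', ‖f x - f y‖ ≤ K * ‖x - y‖ := by
      intro x y
      have := hK x y
      rw [iteratedFDeriv_zero_eq_comp] at this
      rwa [Function.comp_apply, Function.comp_apply, ← LinearIsometryEquiv.map_sub,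
        LinearIsometryEquiv.norm_map] at this
    have := key (p + v) p
    simpa [fd_cons', mul_comm] using this
  | succ n ih =>
    intro F _ _ f K U hU hf hK p
    obtain ⟨v, U', rfl⟩ : ∃ v U', U = v :: U' := by
      cases U with
      | nil => simp at hU
      | cons a b => exact ⟨a, b, rfl⟩
    have hU' : U'.length = n + 1 := by simpa using hU
    have hf1 : ContDiff ℝ ((n : WithTop ℕ∞) + 1) f := by exact_mod_cast hf
    have hdiff : Differentiable ℝ f := (contDiff_succ_iff_fderiv.1 hf1).1
    have hf' : ContDiff ℝ (n : ℕ) (fderiv ℝ f) := (contDiff_succ_iff_fderiv.1 hf1).2.2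
    have hK' : ∀ x y, ‖iteratedFDeriv ℝ n (fderiv ℝ f) x - iteratedFDeriv ℝ n (fderiv ℝ f) y‖
        ≤ K * ‖x - y‖ := by
      intro x y
      have hx := iteratedFDeriv_succ_eq_comp_right (𝕜 := ℝ) (f := f) (x := x) (n := n)
      have hy := iteratedFDeriv_succ_eq_comp_right (𝕜 := ℝ) (f := f) (x := y) (n := n)
      have := hK x y
      rw [hx, hy, Function.comp_apply, Function.comp_apply, ← LinearIsometryEquiv.map_sub,
        LinearIsometryEquiv.norm_map] at this
      exact this
    have hb := ih (fderiv ℝ f) K U' hU' hf' hK'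
    have := fd_mvt hdiff (fun x => hb x) v p
    calc ‖fd (v :: U') f p‖ ≤ K * (U'.map fun v => ‖v‖).prod * ‖v‖ := this
    _ = K * ((v :: U').map fun v => ‖v‖).prod := by simp; ring

end Forward

/-! ### The core: construction of the derivative from second-difference bounds -/

section Core
variable {E' : Type*} [NormedAddCommGroup E'] [NormedSpace ℝ E']
variable {F : Type*} [NormedAddCommGroup F] [NormedSpace ℝ F] [CompleteSpace F]

theorem exists_fderiv_of_second_diff (f : E' → F) (C : ℝ) (hC : 0 ≤ C)
    (h1 : ∀ (v x : E'), ‖f (x + v) - f x‖ ≤ C * ‖v‖)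
    (h2 : ∀ (u v x : E'), ‖f (x + u + v) - f (x + u) - f (x + v) + f x‖ ≤ C * ‖u‖ * ‖v‖) :
    ∃ L : E' → E' →L[ℝ] F, (∀ x, HasFDerivAt f (L x) x) ∧
      ∀ x v, Tendsto (fun n => (2:ℝ)^n • (f (x + ((2:ℝ)⁻¹)^n • v) - f x)) atTop
        (𝓝 (L x v)) := by
  classical
  set a : ℕ → E' → E' → F := fun n x v => (2:ℝ)^n • (f (x + ((2:ℝ)⁻¹)^n • v) - f x) with ha
  have hnormpow : ∀ n : ℕ, ‖((2:ℝ)⁻¹)^n‖ = ((2:ℝ)⁻¹)^n := fun n => by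
    rw [Real.norm_eq_abs, abs_of_nonneg (by positivity)]
  have hnorm2pow : ∀ n : ℕ, ‖((2:ℝ))^n‖ = ((2:ℝ))^n := fun n => by
    rw [Real.norm_eq_abs, abs_of_nonneg (by positivity)]
  have hcancel : ∀ n : ℕ, (2:ℝ)^n * ((2:ℝ)⁻¹)^n = 1 := fun n => by
    rw [← mul_pow]; norm_num
  -- step estimate
  have hstep : ∀ x v (n : ℕ), ‖a (n+1) x v - a n x v‖ ≤ (C * ‖v‖^2 / 2) / 2 / 2^n := by
    intro x v n
    set w : E' := ((2:ℝ)⁻¹)^(n+1) • v with hw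
    have hww : ((2:ℝ)⁻¹)^n • v = w + w := by
      rw [hw, ← add_smul]
      congr 1
      rw [pow_succ]
      ring
    have hnw : ‖w‖ = ((2:ℝ)⁻¹)^(n+1) * ‖v‖ := by
      rw [hw, norm_smul, hnormpow]
    have key : a (n+1) x v - a n x v
        = -((2:ℝ)^n • (f (x + w + w) - f (x + w) - f (x + w) + f x)) := by
      simp only [ha, hww]
      rw [show x + (w + w) = x + w + w by rw [add_assoc], pow_succ]
      module
    rw [key, norm_neg, norm_smul, hnorm2pow]
    have h := h2 w w x
    calc (2:ℝ)^n * ‖f (x + w + w) - f (x + w) - f (x + w) + f x‖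
        ≤ (2:ℝ)^n * (C * ‖w‖ * ‖w‖) :=
          mul_le_mul_of_nonneg_left h (by positivity)
      _ = (C * ‖v‖^2 / 2) / 2 / 2^n := by
          rw [hnw, pow_succ, inv_pow]
          have h2n : (2:ℝ)^n ≠ 0 := by positivity
          field_simp
  -- Cauchy
  have hcauchy : ∀ x v, CauchySeq (fun n => a n x v) := by
    intro x v
    refine cauchySeq_of_le_geometric_two (C := C * ‖v‖^2 / 2) (fun n => ?_)
    rw [dist_eq_norm, norm_sub_rev]
    exact hstep x v n
  set L0 : E' → E' → F := fun x v => limUnder atTop (fun n => a n x v) with hL0def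
  have hL0 : ∀ x v, Tendsto (fun n => a n x v) atTop (𝓝 (L0 x v)) := fun x v =>
    (hcauchy x v).tendsto_limUnder
  have happrox : ∀ x v, ‖f (x + v) - f x - L0 x v‖ ≤ C * ‖v‖^2 / 2 := by
    intro x v
    have h := dist_le_of_le_geometric_two_of_tendsto₀ (C := C * ‖v‖^2 / 2)
      (fun n => by rw [dist_eq_norm, norm_sub_rev]; exact hstep x v n) (hL0 x v)
    have e : a 0 x v = f (x + v) - f x := by simp [ha]
    rwa [dist_eq_norm, e] at h
  have hnorm : ∀ x v, ‖L0 x v‖ ≤ C * ‖v‖ := by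
    intro x v
    refine le_of_tendsto (hL0 x v).norm (Eventually.of_forall fun n => ?_)
    have := h1 (((2:ℝ)⁻¹)^n • v) x
    rw [norm_smul, hnormpow] at this
    calc ‖a n x v‖ = (2:ℝ)^n * ‖f (x + ((2:ℝ)⁻¹)^n • v) - f x‖ := by
          rw [ha]; rw [norm_smul, hnorm2pow]
      _ ≤ (2:ℝ)^n * (C * (((2:ℝ)⁻¹)^n * ‖v‖)) := mul_le_mul_of_nonneg_left this (by positivity)
      _ = (2^n * ((2:ℝ)⁻¹)^n) * (C * ‖v‖) := by ring
      _ = C * ‖v‖ := by rw [hcancel]; ring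
  have hshift : ∀ x u v, ‖L0 (x + u) v - L0 x v‖ ≤ C * ‖u‖ * ‖v‖ := by
    intro x u v
    refine le_of_tendsto ((hL0 (x+u) v).sub (hL0 x v)).norm (Eventually.of_forall fun n => ?_)
    set w : E' := ((2:ℝ)⁻¹)^n • v with hw
    have key : a n (x+u) v - a n x v = (2:ℝ)^n • (f (x + u + w) - f (x + u) - f (x + w) + f x) := by
      simp only [ha, ← hw]
      module
    rw [key, norm_smul, hnorm2pow]
    have h := h2 u w x
    have hnw : ‖w‖ = ((2:ℝ)⁻¹)^n * ‖v‖ := by rw [hw, norm_smul, hnormpow]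
    calc (2:ℝ)^n * ‖f (x + u + w) - f (x + u) - f (x + w) + f x‖
        ≤ (2:ℝ)^n * (C * ‖u‖ * ‖w‖) := mul_le_mul_of_nonneg_left h (by positivity)
      _ = (2^n * ((2:ℝ)⁻¹)^n) * (C * ‖u‖ * ‖v‖) := by rw [hnw]; ring
      _ = C * ‖u‖ * ‖v‖ := by rw [hcancel]; ring
  have hhalf : ∀ x v, L0 x (((2:ℝ)⁻¹) • v) = (2:ℝ)⁻¹ • L0 x v := by
    intro x v
    have e : ∀ n, a n x ((2:ℝ)⁻¹ • v) = (2:ℝ)⁻¹ • a (n+1) x v := by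
      intro n
      simp only [ha]
      rw [smul_smul, smul_smul, ← pow_succ]
      rw [show (2:ℝ)⁻¹ * (2:ℝ)^(n+1) = 2^n by
        rw [pow_succ, mul_comm ((2:ℝ)^n) 2, ← mul_assoc,
          inv_mul_cancel₀ (by norm_num : (2:ℝ) ≠ 0), one_mul]]
    have t1 : Tendsto (fun n => (2:ℝ)⁻¹ • a (n+1) x v) atTop (𝓝 ((2:ℝ)⁻¹ • L0 x v)) :=
      Tendsto.const_smul ((hL0 x v).comp (tendsto_add_atTop_nat 1)) _
    have t2 := hL0 x ((2:ℝ)⁻¹ • v)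
    rw [show (fun n => a n x ((2:ℝ)⁻¹ • v)) = fun n => (2:ℝ)⁻¹ • a (n+1) x v from funext e] at t2
    exact tendsto_nhds_unique t2 t1
  have hadd : ∀ x u v, L0 x (u + v) = L0 x u + L0 x v := by
    intro x u v
    set K : E' → E' → ℝ := fun u v => C/2*(‖u+v‖^2 + ‖u‖^2 + ‖v‖^2) + C*‖u‖*‖v‖ with hK
    have hbound : ∀ u v, ‖L0 x (u+v) - L0 x u - L0 x v‖ ≤ K u v := by
      intro u v
      have t1 := happrox x (u+v)
      have t2 := happrox (x+v) u
      have t3 := hshift x v u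
      have t4 := happrox x v
      have hx : x + (u + v) = x + v + u := by rw [add_assoc, add_comm u v]
      have key : L0 x (u+v) - L0 x u - L0 x v
          = -(f (x+(u+v)) - f x - L0 x (u+v)) + (f (x+v+u) - f (x+v) - L0 (x+v) u)
            + (L0 (x+v) u - L0 x u) + (f (x+v) - f x - L0 x v) := by
        rw [hx]; abel
      rw [key]
      have := norm_add_le (-(f (x+(u+v)) - f x - L0 x (u+v)) + (f (x+v+u) - f (x+v) - L0 (x+v) u)
            + (L0 (x+v) u - L0 x u)) (f (x+v) - f x - L0 x v)
      refine this.trans ?_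
      have h3 := norm_add_le (-(f (x+(u+v)) - f x - L0 x (u+v)) + (f (x+v+u) - f (x+v) - L0 (x+v) u))
          (L0 (x+v) u - L0 x u)
      have h4 := norm_add_le (-(f (x+(u+v)) - f x - L0 x (u+v))) (f (x+v+u) - f (x+v) - L0 (x+v) u)
      rw [norm_neg] at h4
      rw [hK]
      have t1' : ‖f (x + (u+v)) - f x - L0 x (u+v)‖ ≤ C * ‖u+v‖^2/2 := t1
      nlinarith [t1', t2, t3, t4, norm_nonneg (L0 (x+v) u - L0 x u)]
    have hhalfδ : ∀ u v, L0 x ((2:ℝ)⁻¹•u + (2:ℝ)⁻¹•v) - L0 x ((2:ℝ)⁻¹•u) - L0 x ((2:ℝ)⁻¹•v)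
        = (2:ℝ)⁻¹ • (L0 x (u + v) - L0 x u - L0 x v) := by
      intro u v
      rw [show (2:ℝ)⁻¹•u + (2:ℝ)⁻¹•v = (2:ℝ)⁻¹•(u+v) from (smul_add _ u v).symm,
        hhalf, hhalf, hhalf]
      module
    have hKhalf : ∀ u v, K ((2:ℝ)⁻¹•u) ((2:ℝ)⁻¹•v) = K u v / 4 := by
      intro u v
      rw [hK]
      simp only
      rw [show (2:ℝ)⁻¹•u + (2:ℝ)⁻¹•v = (2:ℝ)⁻¹•(u+v) from (smul_add _ u v).symm]
      rw [norm_smul, norm_smul, norm_smul]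
      rw [Real.norm_eq_abs, abs_of_nonneg (by norm_num : (0:ℝ) ≤ 2⁻¹)]
      ring
    have hiter : ∀ (n : ℕ) (u v : E'), ‖L0 x (u+v) - L0 x u - L0 x v‖ ≤ K u v / 2^n := by
      intro n
      induction n with
      | zero => intro u v; simpa using hbound u v
      | succ n ihn =>
        intro u v
        have e1 : L0 x (u+v) - L0 x u - L0 x v
            = (2:ℝ) • (L0 x ((2:ℝ)⁻¹•u + (2:ℝ)⁻¹•v) - L0 x ((2:ℝ)⁻¹•u) - L0 x ((2:ℝ)⁻¹•v)) := by
          rw [hhalfδ, smul_smul]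
          norm_num
        rw [e1, norm_smul, Real.norm_eq_abs, abs_of_nonneg (by norm_num : (0:ℝ) ≤ 2)]
        have := ihn ((2:ℝ)⁻¹•u) ((2:ℝ)⁻¹•v)
        rw [hKhalf] at this
        calc (2:ℝ) * ‖L0 x ((2:ℝ)⁻¹•u + (2:ℝ)⁻¹•v) - L0 x ((2:ℝ)⁻¹•u) - L0 x ((2:ℝ)⁻¹•v)‖
            ≤ 2 * (K u v / 4 / 2^n) := by linarith
          _ = K u v / 2^(n+1) := by rw [pow_succ]; ring
    have hzero : ‖L0 x (u+v) - L0 x u - L0 x v‖ ≤ 0 := by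
      have htend : Tendsto (fun n : ℕ => K u v / 2^n) atTop (𝓝 0) := by
        have : Tendsto (fun n : ℕ => ((2:ℝ)⁻¹)^n) atTop (𝓝 0) :=
          tendsto_pow_atTop_nhds_zero_of_lt_one (by norm_num) (by norm_num)
        have := this.const_mul (K u v)
        rw [mul_zero] at this
        refine this.congr (fun n => ?_)
        rw [inv_pow]
        ring
      exact le_of_tendsto_of_tendsto' tendsto_const_nhds htend (fun n => hiter n u v)
    have := norm_le_zero_iff.1 hzero
    rw [sub_sub, sub_eq_zero] at this
    exact this
  have hlip : ∀ x, LipschitzWith C.toNNReal (L0 x) := by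
    intro x
    refine LipschitzWith.of_dist_le_mul (fun u v => ?_)
    have heq : L0 x u = L0 x (u - v) + L0 x v := by
      rw [← hadd, sub_add_cancel]
    rw [dist_eq_norm, dist_eq_norm, heq, add_sub_cancel_right, Real.coe_toNNReal _ hC]
    exact hnorm x (u - v)
  set L : E' → E' →L[ℝ] F := fun x =>
    (AddMonoidHom.mk' (L0 x) (fun u v => hadd x u v)).toRealLinearMap (hlip x).continuous
    with hLdef
  have hLcoe : ∀ x v, L x v = L0 x v := fun x v => rfl
  refine ⟨L, fun x => ?_, fun x v => by rw [hLcoe]; exact hL0 x v⟩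
  rw [hasFDerivAt_iff_isLittleO_nhds_zero]
  refine Asymptotics.isLittleO_iff.2 (fun ε hε => ?_)
  have hδpos : (0:ℝ) < 2*ε/(C+1) := by positivity
  filter_upwards [Metric.ball_mem_nhds (0:E') hδpos] with v hv
  rw [Metric.mem_ball, dist_zero_right] at hv
  have hv' : ‖v‖ * (C+1) < 2*ε := by
    rw [← lt_div_iff₀ (by positivity : (0:ℝ) < C+1)]
    exact hv
  have := (happrox x v)
  rw [← hLcoe] at this
  calc ‖f (x + v) - f x - L x v‖ ≤ C * ‖v‖^2/2 := this
    _ ≤ ε * ‖v‖ := by nlinarith [norm_nonneg v, mul_nonneg (norm_nonneg v) (sub_nonneg.2 hv'.le)]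

end Core

/-! ### Converse direction -/

section Converse
variable {E' : Type uE} [NormedAddCommGroup E'] [NormedSpace ℝ E']

theorem converse_bounds : ∀ (r : ℕ), 1 ≤ r → ∀ {F : Type (max uE uF)} [NormedAddCommGroup F]
    [NormedSpace ℝ F] [CompleteSpace F] (f : E' → F) (C : ℝ), 0 ≤ C →
    (∀ (U : List E') (p : E'), U.length ≤ r → ‖fd U f p‖ ≤ C * (U.map fun v => ‖v‖).prod) →
    ContDiff ℝ ((r - 1 : ℕ)) f ∧ (∀ j : ℕ, j ≤ r - 1 → ∀ p, ‖iteratedFDeriv ℝ j f p‖ ≤ C) ∧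
    ∀ p q, ‖iteratedFDeriv ℝ (r-1) f p - iteratedFDeriv ℝ (r-1) f q‖ ≤ C * ‖p - q‖ := by
  intro r hr
  induction r, hr using Nat.le_induction with
  | base =>
    intro F _ _ _ f C hC H
    have hLip : ∀ p q : E', ‖f p - f q‖ ≤ C * ‖p - q‖ := by
      intro p q
      have := H [p - q] q (by simp)
      simpa [fd_cons, add_sub_cancel] using this
    have hbd : ∀ p, ‖f p‖ ≤ C := by
      intro p
      simpa using H [] p (by simp)
    refine ⟨?_, ?_, ?_⟩
    · show ContDiff ℝ ((0:ℕ)) f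
      rw [show ((0:ℕ) : WithTop ℕ∞) = 0 from rfl, contDiff_zero]
      have : LipschitzWith C.toNNReal f := by
        refine LipschitzWith.of_dist_le_mul (fun p q => ?_)
        rw [dist_eq_norm, dist_eq_norm, Real.coe_toNNReal _ hC]
        exact hLip p q
      exact this.continuous
    · intro j hj p
      interval_cases j
      rw [norm_iteratedFDeriv_zero]
      exact hbd p
    · intro p q
      show ‖iteratedFDeriv ℝ 0 f p - iteratedFDeriv ℝ 0 f q‖ ≤ C * ‖p - q‖
      rw [iteratedFDeriv_zero_eq_comp, Function.comp_apply, Function.comp_apply,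
        ← LinearIsometryEquiv.map_sub, LinearIsometryEquiv.norm_map]
      exact hLip p q
  | succ m hm ih =>
    intro F _ _ _ f C hC H
    have h1 : ∀ (v x : E'), ‖f (x + v) - f x‖ ≤ C * ‖v‖ := by
      intro v x
      have := H [v] x (by simp)
      simpa [fd_cons] using this
    have h2 : ∀ (u v x : E'), ‖f (x + u + v) - f (x + u) - f (x + v) + f x‖ ≤ C * ‖u‖ * ‖v‖ := by
      intro u v x
      have h := H [v, u] x (by simp; omega)
      have e : fd [v, u] f x = f (x + u + v) - f (x + u) - f (x + v) + f x := by
        simp only [fd_cons, fd_nil]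
        abel
      rw [e] at h
      calc ‖f (x + u + v) - f (x + u) - f (x + v) + f x‖
          ≤ C * (‖v‖ * (‖u‖ * 1)) := by simpa using h
        _ = C * ‖u‖ * ‖v‖ := by ring
    obtain ⟨L, hL1, hL2⟩ := exists_fderiv_of_second_diff f C hC h1 h2
    have hdiff : Differentiable ℝ f := fun x => (hL1 x).differentiableAt
    have hfderiv : ∀ x, fderiv ℝ f x = L x := fun x => (hL1 x).fderiv
    have H' : ∀ (U : List E') (p : E'), U.length ≤ m →
        ‖fd U (fderiv ℝ f) p‖ ≤ C * (U.map fun v => ‖v‖).prod := by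
      intro U p hlen
      have hprod : (0:ℝ) ≤ (U.map fun v => ‖v‖).prod := prod_norm_nonneg U
      refine ContinuousLinearMap.opNorm_le_bound _ (by positivity) (fun v => ?_)
      rw [fd_clm_apply]
      have hLv : ∀ x, Tendsto (fun n => (2:ℝ)^n • (f (x + ((2:ℝ)⁻¹)^n • v) - f x)) atTop
          (𝓝 (fderiv ℝ f x v)) := by
        intro x
        rw [hfderiv]
        exact hL2 x v
      have ht := fd_tendsto (U := U) (g := fun n x => (2:ℝ)^n • (f (x + ((2:ℝ)⁻¹)^n • v) - f x))
        (h := fun x => fderiv ℝ f x v) hLv p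
      refine le_of_tendsto ht.norm (Eventually.of_forall fun n => ?_)
      have e1 : fd U (fun x => (2:ℝ)^n • (f (x + ((2:ℝ)⁻¹)^n • v) - f x)) p
          = (2:ℝ)^n • fd (U ++ [((2:ℝ)⁻¹)^n • v]) f p := by
        rw [fd_append_single, ← fd_smul]
      rw [e1, norm_smul, Real.norm_eq_abs, abs_of_nonneg (by positivity : (0:ℝ) ≤ 2^n)]
      have hb := H (U ++ [((2:ℝ)⁻¹)^n • v]) p (by simp; omega)
      have e2 : ((U ++ [((2:ℝ)⁻¹)^n • v]).map fun v => ‖v‖).prod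
          = (U.map fun v => ‖v‖).prod * (((2:ℝ)⁻¹)^n * ‖v‖) := by
        rw [List.map_append, List.prod_append]
        simp [norm_smul]
      calc (2:ℝ)^n * ‖fd (U ++ [((2:ℝ)⁻¹)^n • v]) f p‖
          ≤ (2:ℝ)^n * (C * ((U.map fun v => ‖v‖).prod * (((2:ℝ)⁻¹)^n * ‖v‖))) := by
            rw [← e2]; exact mul_le_mul_of_nonneg_left hb (by positivity)
        _ = ((2:ℝ)^n * ((2:ℝ)⁻¹)^n) * (C * ((U.map fun v => ‖v‖).prod * ‖v‖)) := by ring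
        _ = C * (U.map fun v => ‖v‖).prod * ‖v‖ := by
            rw [← mul_pow]; norm_num; ring
    obtain ⟨ih1, ih2, ih3⟩ := ih (fderiv ℝ f) C hC H'
    obtain ⟨k, rfl⟩ : ∃ k, m = k + 1 := ⟨m - 1, (Nat.succ_pred_eq_of_pos hm).symm⟩
    have hmk : k + 1 - 1 = k := rfl
    rw [hmk] at ih1 ih2 ih3
    have hrk : k + 1 + 1 - 1 = k + 1 := rfl
    rw [hrk]
    have hContDiff : ContDiff ℝ ((k + 1 : ℕ)) f := by
      have : ContDiff ℝ ((k : WithTop ℕ∞) + 1) f := by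
        rw [contDiff_succ_iff_fderiv]
        exact ⟨hdiff, by simp, ih1⟩
      exact_mod_cast this
    refine ⟨hContDiff, ?_, ?_⟩
    · intro j hj p
      match j with
      | 0 =>
        rw [norm_iteratedFDeriv_zero]
        simpa using H [] p (by simp)
      | (i+1) =>
        rw [← norm_iteratedFDeriv_fderiv]
        exact ih2 i (by omega) p
    · intro p q
      have e : ∀ x : E', iteratedFDeriv ℝ (k+1) f x
          = (continuousMultilinearCurryRightEquiv' ℝ k E' F).symm
              (iteratedFDeriv ℝ k (fderiv ℝ f) x) := by
        intro x
        rw [iteratedFDeriv_succ_eq_comp_right]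
        rfl
      rw [e p, e q, ← LinearIsometryEquiv.map_sub, LinearIsometryEquiv.norm_map]
      exact ih3 p q

end Converse

/-! ### Glue: transporting through linear isometries, the pairing, bound equivalences -/

section Glue
variable {E' : Type*} [NormedAddCommGroup E'] [NormedSpace ℝ E']
variable {F G : Type*} [NormedAddCommGroup F] [NormedSpace ℝ F]
  [NormedAddCommGroup G] [NormedSpace ℝ G]

/-- The `C^{r-1}+Lip` side conditions, for an arbitrary target space. -/
def CSide (r : ℕ) (f : E' → F) (C : ℝ) : Prop :=
  ContDiff ℝ (r - 1 : ℕ) f ∧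
  (∀ j : ℕ, j ≤ r - 1 → ∀ p : E', ‖iteratedFDeriv ℝ j f p‖ ≤ C) ∧
  (∀ p q : E', ‖iteratedFDeriv ℝ (r - 1) f p - iteratedFDeriv ℝ (r - 1) f q‖ ≤ C * ‖p - q‖)

lemma compCMM_sub {ι : Type*} [Fintype ι] {M : ι → Type*} [∀ i, NormedAddCommGroup (M i)]
    [∀ i, NormedSpace ℝ (M i)] (g : F →L[ℝ] G) (m m' : ContinuousMultilinearMap ℝ M F) :
    g.compContinuousMultilinearMap (m - m') =
      g.compContinuousMultilinearMap m - g.compContinuousMultilinearMap m' := by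
  ext v
  simp

lemma CSide_comp_lie_of {r : ℕ} {C : ℝ} (e : F ≃ₗᵢ[ℝ] G) {f : E' → F}
    (h : CSide r f C) : CSide r (fun x => e (f x)) C := by
  obtain ⟨h1, h2, h3⟩ := h
  have hcd : ContDiff ℝ (r - 1 : ℕ) (fun x => e (f x)) := by
    have := e.toContinuousLinearEquiv.comp_contDiff_iff (f := f)
      (n := ((r - 1 : ℕ) : WithTop ℕ∞))
    rw [show (⇑e.toContinuousLinearEquiv ∘ f) = fun x => e (f x) by
      funext x; simp] at this
    exact this.2 h1
  have hiter : ∀ (i : ℕ), i ≤ r - 1 → ∀ x, iteratedFDeriv ℝ i (fun x => e (f x)) x =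
      (e.toLinearIsometry.toContinuousLinearMap).compContinuousMultilinearMap
        (iteratedFDeriv ℝ i f x) := by
    intro i hi x
    have := ContinuousLinearMap.iteratedFDeriv_comp_left
      (e.toLinearIsometry.toContinuousLinearMap) (h1.contDiffAt (x := x)) (i := i) (by exact_mod_cast hi)
    rw [show (⇑e.toLinearIsometry.toContinuousLinearMap ∘ f) = fun x => e (f x) by
      funext x; simp] at this
    exact this
  refine ⟨hcd, ?_, ?_⟩
  · intro j hj p
    rw [hiter j hj p, e.toLinearIsometry.norm_compContinuousMultilinearMap]
    exact h2 j hj p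
  · intro p q
    rw [hiter (r-1) le_rfl p, hiter (r-1) le_rfl q, ← compCMM_sub,
      e.toLinearIsometry.norm_compContinuousMultilinearMap]
    exact h3 p q

lemma CSide_comp_lie {r : ℕ} {C : ℝ} (e : F ≃ₗᵢ[ℝ] G) (f : E' → F) :
    CSide r (fun x => e (f x)) C ↔ CSide r f C := by
  constructor
  · intro h
    have := CSide_comp_lie_of e.symm h
    simpa using this
  · exact CSide_comp_lie_of e

end Glue

section ForwardWrap
variable {E' : Type uE} [NormedAddCommGroup E'] [NormedSpace ℝ E']

lemma fd_bound_of_CSide {F : Type (max uE uF)} [NormedAddCommGroup F] [NormedSpace ℝ F]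
    (r : ℕ) (hr : 1 ≤ r) (f : E' → F) (C : ℝ) (h : CSide r f C) :
    ∀ (U : List E') (p : E'), U.length ≤ r →
      ‖fd U f p‖ ≤ C * (U.map fun v => ‖v‖).prod := by
  intro U p hlen
  obtain ⟨h1, h2, h3⟩ := h
  by_cases hc : U.length ≤ r - 1
  · refine norm_fd_le U.length f C U rfl ?_ (fun x => h2 U.length hc x) p
    exact h1.of_le (by exact_mod_cast hc)
  · have hUr : U.length = (r - 1) + 1 := by omega
    exact norm_fd_le_lip (r-1) f C U hUr h1 (fun x y => h3 x y) p

end ForwardWrap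

section PairGlue
variable {E₁ : Type uE} [NormedAddCommGroup E₁] [NormedSpace ℝ E₁]
  {V₁ : Type uV} [NormedAddCommGroup V₁] [NormedSpace ℝ V₁]

lemma pairF_diffChain (U : List E₁) : ∀ (ω : E₁ → V₁ →L[ℝ] ℝ) (p : E₁) (α : V₁),
    pairF (fun x β => ω x β) (diffChain U p α) = fd U (fun x => ω x α) p := by
  induction U with
  | nil =>
    intro ω p α
    show pairF _ (Finsupp.single p α) = _
    unfold pairF
    rw [Finsupp.sum_single_index (by simp)]
    rfl
  | cons u U ih =>
    intro ω p α
    show pairF _ (Finsupp.mapDomain (· + u) (diffChain U p α) - diffChain U p α) = _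
    unfold pairF
    rw [Finsupp.sum_sub_index (by intro a b₁ b₂; simp)]
    rw [Finsupp.sum_mapDomain_index (by simp) (by intro b m₁ m₂; simp)]
    rw [fd_cons]
    have e1 := ih (fun x => ω (x + u)) p α
    have e2 := ih ω p α
    unfold pairF at e1 e2
    rw [e1, e2]

lemma isBBound_iff_fd (r : ℕ) (ω : E₁ → V₁ →L[ℝ] ℝ) (C : ℝ) (hC : 0 ≤ C) :
    IsBBound r (fun p α => ω p α) C ↔
      ∀ (U : List E₁) (p : E₁), U.length ≤ r →
        ‖fd U ω p‖ ≤ C * (U.map fun v => ‖v‖).prod := by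
  constructor
  · intro h U p hlen
    refine ContinuousLinearMap.opNorm_le_bound _
      (mul_nonneg hC (prod_norm_nonneg U)) (fun α => ?_)
    have hb := h U p α hlen
    calc ‖fd U ω p α‖ = |pairF (fun p α => ω p α) (diffChain U p α)| := by
          rw [Real.norm_eq_abs, pairF_diffChain U ω p α, fd_clm_apply]
      _ ≤ C * dweight U α := hb
      _ = C * (U.map fun v => ‖v‖).prod * ‖α‖ := by simp only [dweight]; ring
  · intro h U p α hlen
    have hb := h U p hlen
    calc |pairF (fun p α => ω p α) (diffChain U p α)| = ‖fd U ω p α‖ := by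
          rw [Real.norm_eq_abs, pairF_diffChain U ω p α, fd_clm_apply]
      _ ≤ ‖fd U ω p‖ * ‖α‖ := (fd U ω p).le_opNorm α
      _ ≤ C * (U.map fun v => ‖v‖).prod * ‖α‖ :=
          mul_le_mul_of_nonneg_right hb (norm_nonneg α)
      _ = C * dweight U α := by simp only [dweight]; ring

theorem main_pointwise (r : ℕ) (hr : 1 ≤ r) (ω : E₁ → V₁ →L[ℝ] ℝ) (C : ℝ) (hC : 0 ≤ C) :
    IsBBound r (fun p α => ω p α) C ↔ IsCBound r ω C := by
  set e : ULift.{uE} (V₁ →L[ℝ] ℝ) ≃ₗᵢ[ℝ] (V₁ →L[ℝ] ℝ) :=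
    LinearIsometryEquiv.ulift ℝ (V₁ →L[ℝ] ℝ) with he
  constructor
  · intro hB
    have hfd := (isBBound_iff_fd r ω C hC).1 hB
    have hfd' : ∀ (U : List E₁) (p : E₁), U.length ≤ r →
        ‖fd U (fun x => e.symm (ω x)) p‖ ≤ C * (U.map fun v => ‖v‖).prod := by
      intro U p hlen
      rw [fd_comp_lie e.symm U ω p, LinearIsometryEquiv.norm_map]
      exact hfd U p hlen
    have hconc := converse_bounds r hr (fun x => e.symm (ω x)) C hC hfd'
    have hside : CSide r (fun x => e.symm (ω x)) C := ⟨hconc.1, hconc.2.1, hconc.2.2⟩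
    have := (CSide_comp_lie e.symm ω).1 hside
    exact ⟨this.1, this.2.1, this.2.2⟩
  · intro hCb
    have hside : CSide r ω C := ⟨hCb.1, hCb.2.1, hCb.2.2⟩
    have hg : CSide r (fun x => e.symm (ω x)) C := (CSide_comp_lie e.symm ω).2 hside
    have hfd' := fd_bound_of_CSide r hr (fun x => e.symm (ω x)) C hg
    refine (isBBound_iff_fd r ω C hC).2 (fun U p hlen => ?_)
    have := hfd' U p hlen
    rw [fd_comp_lie e.symm U ω p, LinearIsometryEquiv.norm_map] at this
    exact this

end PairGlue

/-- For a bounded `k`-form `ω` on `ℝⁿ` and `r ≥ 1`, the norm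
`‖ω‖_{B^r} = max{|ω|_{B⁰},…,|ω|_{B^r}}` defined via finite differences equals the norm
`‖ω‖_{C^{r−1+Lip}} = max{|ω|_{C⁰},…,|ω|_{C^{r−1}},|ω|_{L^r}}` defined via directional
derivatives and Lipschitz constants; in particular one is finite iff the other is. -/
theorem Br_eq_Cr_lip (r : ℕ) (hr : 1 ≤ r) (ω : E → V →L[ℝ] ℝ)
    (hbdd : ∃ M : ℝ, ∀ p : E, ‖ω p‖ ≤ M) :
    ((∃ C, 0 ≤ C ∧ IsBBound r (fun p α => ω p α) C) ↔
      (∃ C, 0 ≤ C ∧ IsCBound r ω C)) ∧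
    sInf {C : ℝ | 0 ≤ C ∧ IsBBound r (fun p α => ω p α) C} =
      sInf {C : ℝ | 0 ≤ C ∧ IsCBound r ω C} := by
  have hpt : ∀ C : ℝ, (0 ≤ C ∧ IsBBound r (fun p α => ω p α) C) ↔
      (0 ≤ C ∧ IsCBound r ω C) := fun C =>
    and_congr_right (fun hC => main_pointwise r hr ω C hC)
  exact ⟨exists_congr hpt, congrArg sInf (Set.ext hpt)⟩
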